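/- arXiv:2302.06927 — 2 statements merged into one kernel-verified Lean document; each statement's English description precedes it below -/
import Mathlib

section
/- Let K ⊆ ℝⁿ be compact and let y = (y_α)_{α ∈ ℕⁿ_d} be a finite real sequence. Then y is the truncated moment sequence of a nonnegative Borel measure supported on K if and only if the Riesz functional L_y is nonnegative on the cone P(K)_d of polynomials of degree at most d nonnegative on K. (Tchakaloff's theorem / finite-dimensional Riesz–Haviland.) -/
open MvPolynomial MeasureTheory

/-- Total degree of a monomial exponent. -/
def expDeg {n : ℕ} (α : Fin n →₀ ℕ) : ℕ := α.sum fun _ e => e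

lemma apply_le_expDeg {n : ℕ} (α : Fin n →₀ ℕ) (i : Fin n) : α i ≤ expDeg α := by
  by_cases h : α i = 0
  · simp [h]
  · exact Finset.single_le_sum (f := fun j => α j) (fun j _ => Nat.zero_le _)
      (Finsupp.mem_support_iff.mpr h)

noncomputable instance expDegFintype {n d : ℕ} : Fintype {α : Fin n →₀ ℕ // expDeg α ≤ d} := by
  apply Fintype.ofInjective
    (fun a : {α : Fin n →₀ ℕ // expDeg α ≤ d} =>
      (fun i => (⟨min (a.1 i) d, by omega⟩ : Fin (d+1)) : Fin n → Fin (d+1)))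
  intro a b hab
  have key : ∀ (c : {α : Fin n →₀ ℕ // expDeg α ≤ d}) (i : Fin n), min (c.1 i) d = c.1 i :=
    fun c i => min_eq_left ((apply_le_expDeg c.1 i).trans c.2)
  ext i
  have := congrFun hab i
  have h1 := key a i; have h2 := key b i
  simp only [Fin.mk.injEq] at this
  omega

lemma prod_pow_eq {n : ℕ} (x : Fin n → ℝ) (α : Fin n →₀ ℕ) :
    (α.prod fun i e => x i ^ e) = ∏ i, x i ^ α i := Finsupp.prod_pow α x

/-- Carathéodory-based compactness of convex hulls in finite dimensions. -/
lemma isCompact_convexHull_of_isCompact {V : Type*} [NormedAddCommGroup V] [NormedSpace ℝ V]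
    [FiniteDimensional ℝ V] {s : Set V} (hs : IsCompact s) : IsCompact (convexHull ℝ s) := by
  rcases s.eq_empty_or_nonempty with rfl | hne
  · simp
  set N := Module.finrank ℝ V + 1 with hN
  have key : convexHull ℝ s =
      ⋃ k : Fin (N+1), (fun wz : (Fin (k:ℕ) → ℝ) × (Fin (k:ℕ) → V) => ∑ i, wz.1 i • wz.2 i) ''
        ((stdSimplex ℝ (Fin (k:ℕ))) ×ˢ (Set.univ.pi fun _ => s)) := by
    apply Set.Subset.antisymm
    · intro x hx
      obtain ⟨ι, hfin, z, w, hzs, hai, hwpos, hw1, hxx⟩ := eq_pos_convex_span_of_mem_convexHull hx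
      letI := hfin
      have hcard : Fintype.card ι ≤ N := by
        refine hai.card_le_finrank_succ.trans ?_
        exact Nat.add_le_add_right (Submodule.finrank_le _) 1
      set k := Fintype.card ι with hk
      let e := Fintype.equivFin ι
      refine Set.mem_iUnion.2 ⟨⟨k, by omega⟩, ?_⟩
      refine ⟨(fun j => w (e.symm j), fun j => z (e.symm j)), ⟨⟨fun j => (hwpos _).le, ?_⟩, ?_⟩, ?_⟩
      · rw [Equiv.sum_comp e.symm w]; exact hw1
      · intro j _; exact hzs (Set.mem_range_self _)
      · simpa using Equiv.sum_comp e.symm (fun i => w i • z i) ▸ hxx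
    · refine Set.iUnion_subset fun k => ?_
      rintro x ⟨⟨w, z⟩, ⟨⟨hw0, hw1⟩, hz⟩, rfl⟩
      exact (convex_convexHull ℝ s).sum_mem (fun i _ => hw0 i) hw1
        (fun i _ => subset_convexHull ℝ s (hz i (Set.mem_univ i)))
  rw [key]
  apply isCompact_iUnion
  intro k
  apply IsCompact.image
  · exact (isCompact_stdSimplex ℝ _).prod (isCompact_univ_pi fun _ => hs)
  · exact continuous_finset_sum _ fun i _ =>
      ((continuous_apply i).comp continuous_fst).smul ((continuous_apply i).comp continuous_snd)

/-- `μ` is a representing measure on `K` for the truncated sequence `y` of degree `≤ d`. -/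
def Represents {n : ℕ} (d : ℕ) (μ : Measure (Fin n → ℝ)) (K : Set (Fin n → ℝ))
    (y : (Fin n →₀ ℕ) → ℝ) : Prop :=
  μ Kᶜ = 0 ∧ ∀ α : Fin n →₀ ℕ, expDeg α ≤ d → y α = ∫ a, ∏ i, (a i) ^ (α i) ∂μ

/-- The Riesz functional `L_y` applied to a polynomial `p`. -/
noncomputable def riesz {n : ℕ} (y : (Fin n →₀ ℕ) → ℝ) (p : MvPolynomial (Fin n) ℝ) : ℝ :=
  ∑ α ∈ p.support, MvPolynomial.coeff α p * y α

lemma riesz_eq_sum_subset {n : ℕ} (y : (Fin n →₀ ℕ) → ℝ) (p : MvPolynomial (Fin n) ℝ)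
    {t : Finset (Fin n →₀ ℕ)} (h : p.support ⊆ t) :
    riesz y p = ∑ α ∈ t, MvPolynomial.coeff α p * y α :=
  Finset.sum_subset h fun α _ hα => by
    rw [MvPolynomial.notMem_support_iff.1 hα, zero_mul]

lemma riesz_monomial {n : ℕ} (y : (Fin n →₀ ℕ) → ℝ) (α : Fin n →₀ ℕ) (c : ℝ) :
    riesz y (monomial α c) = c * y α := by
  rcases eq_or_ne c 0 with rfl | hc
  · simp [riesz]
  · rw [riesz, support_monomial, if_neg hc, Finset.sum_singleton, coeff_monomial, if_pos rfl]

lemma continuous_monoFun {n : ℕ} (α : Fin n →₀ ℕ) :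
    Continuous (fun a : Fin n → ℝ => ∏ i, (a i) ^ (α i)) :=
  continuous_finset_prod _ fun i _ => (continuous_apply i).pow _

lemma integrable_dirac_of_continuous {n : ℕ} {f : (Fin n → ℝ) → ℝ} (hf : Continuous f)
    (a : Fin n → ℝ) : Integrable f (Measure.dirac a) := by
  refine ⟨hf.aestronglyMeasurable, ?_⟩
  rw [HasFiniteIntegral, lintegral_dirac]
  exact ENNReal.coe_lt_top

/-- Forward direction: a representing measure makes the Riesz functional nonnegative. -/
lemma forward_dir {n d : ℕ} (K : Set (Fin n → ℝ)) (hK : IsCompact K)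
    (y : (Fin n →₀ ℕ) → ℝ) (μ : Measure (Fin n → ℝ)) [IsFiniteMeasure μ]
    (hrep : Represents d μ K y) (p : MvPolynomial (Fin n) ℝ) (hdeg : p.totalDegree ≤ d)
    (hpos : ∀ a ∈ K, 0 ≤ MvPolynomial.eval a p) : 0 ≤ riesz y p := by
  obtain ⟨hμc, hmom⟩ := hrep
  have hint : ∀ α : Fin n →₀ ℕ, Integrable (fun a : Fin n → ℝ => ∏ i, (a i) ^ (α i)) μ := by
    intro α
    obtain ⟨C, hC⟩ := hK.exists_bound_of_continuousOn (continuous_monoFun α).continuousOn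
    refine (integrable_const C).mono' (continuous_monoFun α).aestronglyMeasurable ?_
    refine ae_iff.2 (measure_mono_null ?_ hμc)
    intro a ha
    simp only [Set.mem_setOf_eq, not_le] at ha
    intro haK
    exact absurd (hC a haK) (not_le.2 ha)
  have key : riesz y p = ∫ a, MvPolynomial.eval a p ∂μ := by
    rw [riesz]
    have : ∀ α ∈ p.support, MvPolynomial.coeff α p * y α
        = ∫ a, MvPolynomial.coeff α p * ∏ i, (a i) ^ (α i) ∂μ := by
      intro α hα
      rw [hmom α ((le_totalDegree hα).trans hdeg), MeasureTheory.integral_const_mul]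
    rw [Finset.sum_congr rfl this, ← integral_finset_sum _ (fun α _ => (hint α).const_mul _)]
    congr 1
    ext a
    rw [MvPolynomial.eval_eq']
  rw [key]
  refine integral_nonneg_of_ae (ae_iff.2 (measure_mono_null ?_ hμc))
  intro a ha
  simp only [Set.mem_setOf_eq, not_le] at ha
  intro haK
  exact absurd (hpos a haK) (not_le.2 ha)

/-- The moment-vector map into Euclidean space indexed by exponents of degree at most `d`. -/
noncomputable def mvec (n d : ℕ) (x : Fin n → ℝ) :
    EuclideanSpace ℝ {α : Fin n →₀ ℕ // expDeg α ≤ d} :=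
  WithLp.toLp 2 (fun α => ∏ i, (x i) ^ (α.1 i))

lemma continuous_mvec (n d : ℕ) : Continuous (mvec n d) := by
  have : Continuous (fun x : Fin n → ℝ =>
      (fun α : {α : Fin n →₀ ℕ // expDeg α ≤ d} => ∏ i, (x i) ^ (α.1 i))) :=
    continuous_pi fun α => continuous_finset_prod _ fun i _ => (continuous_apply i).pow _
  exact (PiLp.continuous_toLp (p := 2) (β := fun _ => ℝ)).comp this

/-- The polynomial associated to a dual vector. -/
noncomputable def pOf {n d : ℕ} (v : EuclideanSpace ℝ {α : Fin n →₀ ℕ // expDeg α ≤ d}) :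
    MvPolynomial (Fin n) ℝ :=
  ∑ α : {α : Fin n →₀ ℕ // expDeg α ≤ d}, monomial α.1 (v α)

lemma totalDegree_pOf {n d : ℕ} (v : EuclideanSpace ℝ {α : Fin n →₀ ℕ // expDeg α ≤ d}) :
    (pOf v).totalDegree ≤ d := by
  refine (totalDegree_finset_sum _ _).trans (Finset.sup_le fun α _ => ?_)
  rcases eq_or_ne (v α) 0 with h | h
  · simp [h]
  · rw [totalDegree_monomial _ h]; exact α.2

lemma eval_pOf {n d : ℕ} (v : EuclideanSpace ℝ {α : Fin n →₀ ℕ // expDeg α ≤ d})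
    (x : Fin n → ℝ) :
    MvPolynomial.eval x (pOf v) = ∑ α : {α : Fin n →₀ ℕ // expDeg α ≤ d}, v α * ∏ i, (x i) ^ (α.1 i) := by
  rw [pOf, map_sum]
  exact Finset.sum_congr rfl fun α _ => by rw [eval_monomial, prod_pow_eq]

lemma coeff_pOf {n d : ℕ} (v : EuclideanSpace ℝ {α : Fin n →₀ ℕ // expDeg α ≤ d})
    (α : {α : Fin n →₀ ℕ // expDeg α ≤ d}) :
    MvPolynomial.coeff α.1 (pOf v) = v α := by
  classical
  rw [pOf]
  rw [MvPolynomial.coeff_sum]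
  rw [Finset.sum_eq_single α]
  · rw [coeff_monomial, if_pos rfl]
  · intro β _ hβ
    rw [coeff_monomial, if_neg (fun h => hβ (Subtype.ext h))]
  · intro h; exact absurd (Finset.mem_univ α) h

lemma riesz_pOf {n d : ℕ} (y : (Fin n →₀ ℕ) → ℝ)
    (v : EuclideanSpace ℝ {α : Fin n →₀ ℕ // expDeg α ≤ d}) :
    riesz y (pOf v) = ∑ α : {α : Fin n →₀ ℕ // expDeg α ≤ d}, v α * y α.1 := by
  classical
  have hsub : (pOf v).support ⊆ Finset.univ.image
      (fun α : {α : Fin n →₀ ℕ // expDeg α ≤ d} => α.1) := by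
    refine (support_sum).trans ?_
    intro β hβ
    simp only [Finset.mem_biUnion] at hβ
    obtain ⟨α, _, hβ⟩ := hβ
    have := support_monomial_subset hβ
    simp only [Finset.mem_singleton] at this
    subst this
    exact Finset.mem_image_of_mem _ (Finset.mem_univ α)
  rw [riesz_eq_sum_subset y _ hsub,
    Finset.sum_image (fun a _ b _ h => Subtype.ext h)]
  exact Finset.sum_congr rfl fun α _ => by rw [coeff_pOf]
lemma euclid_inner {ι : Type} [Fintype ι] (a b : EuclideanSpace ℝ ι) :
    (inner ℝ a b : ℝ) = ∑ i, a i * b i := by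
  simp [PiLp.inner_apply, RCLike.inner_apply, conj_trivial, mul_comm]

lemma expDeg_zero {n : ℕ} : expDeg (0 : Fin n →₀ ℕ) = 0 := by simp [expDeg]


/-- Tchakaloff's theorem: for compact `K`, `y` is moment-representable on `K` iff the
Riesz functional `L_y` is nonnegative on the cone of polynomials of degree `≤ d`
nonnegative on `K`. -/
theorem stmt4 {n d : ℕ} (K : Set (Fin n → ℝ)) (hK : IsCompact K)
    (y : (Fin n →₀ ℕ) → ℝ) :
    (∃ μ : Measure (Fin n → ℝ), IsFiniteMeasure μ ∧ Represents d μ K y) ↔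
      ∀ p : MvPolynomial (Fin n) ℝ, p.totalDegree ≤ d →
        (∀ a ∈ K, 0 ≤ MvPolynomial.eval a p) → 0 ≤ riesz y p := by
  constructor
  · rintro ⟨μ, hfin, hrep⟩ p hdeg hpos
    exact @forward_dir n d K hK y μ hfin hrep p hdeg hpos
  intro H
  by_cases hKne : K.Nonempty
  swap
  · -- empty case
    have hKe : K = ∅ := Set.not_nonempty_iff_eq_empty.mp hKne
    subst hKe
    refine ⟨0, inferInstance, by simp, fun α hα => ?_⟩
    have hy0 : y α = 0 := by
      have h1 := H (monomial α 1) (by rw [totalDegree_monomial α (one_ne_zero)]; exact hα)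
        (fun a ha => absurd ha (Set.notMem_empty a))
      have h2 := H (monomial α (-1)) (by
          rw [totalDegree_monomial α (by norm_num : (-1:ℝ) ≠ 0)]; exact hα)
        (fun a ha => absurd ha (Set.notMem_empty a))
      rw [riesz_monomial] at h1 h2
      linarith
    rw [hy0]
    simp
  -- main case
  classical
  set V := EuclideanSpace ℝ {α : Fin n →₀ ℕ // expDeg α ≤ d} with hV
  set M : Set V := mvec n d '' K with hM
  have hMcomp : IsCompact M := hK.image (continuous_mvec n d)
  set W : Set V := convexHull ℝ M with hW
  have hWcomp : IsCompact W := isCompact_convexHull_of_isCompact hMcomp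
  set C : ConvexCone ℝ V :=
    { carrier := {v | ∃ r : ℝ, 0 ≤ r ∧ ∃ w ∈ W, v = r • w}
      smul_mem' := by
        rintro c hc v ⟨r, hr, w, hw, rfl⟩
        exact ⟨c * r, mul_nonneg hc.le hr, w, hw, (mul_smul c r w).symm⟩
      add_mem' := by
        rintro v ⟨r, hr, w, hw, rfl⟩ v' ⟨r', hr', w', hw', rfl⟩
        by_cases h : r + r' = 0
        · have hr0 : r = 0 := by linarith
          have hr'0 : r' = 0 := by linarith
          exact ⟨0, le_refl 0, w, hw, by simp [hr0, hr'0]⟩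
        · have hpos : 0 < r + r' := lt_of_le_of_ne (add_nonneg hr hr') (Ne.symm h)
          refine ⟨r + r', hpos.le, (r/(r+r')) • w + (r'/(r+r')) • w',
            (convex_convexHull ℝ M) hw hw' (div_nonneg hr hpos.le) (div_nonneg hr' hpos.le)
              (by field_simp), ?_⟩
          rw [smul_add, smul_smul, smul_smul, mul_div_cancel₀ _ h, mul_div_cancel₀ _ h] } with hC
  have hα₀ : expDeg (0 : Fin n →₀ ℕ) ≤ d := by rw [expDeg_zero]; exact Nat.zero_le d
  set α₀ : {α : Fin n →₀ ℕ // expDeg α ≤ d} := ⟨0, hα₀⟩ with hα₀def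
  have hmvec0 : ∀ x : Fin n → ℝ, mvec n d x α₀ = 1 := by
    intro x; simp [mvec, hα₀def]
  have hWone : ∀ w ∈ W, w α₀ = 1 := by
    have hconv : Convex ℝ {w : V | w α₀ = 1} :=
      convex_hyperplane (⟨fun a b => rfl, fun c a => rfl⟩ : IsLinearMap ℝ fun w : V => w α₀) 1
    intro w hw
    refine convexHull_min ?_ hconv hw
    rintro v ⟨x, hx, rfl⟩
    exact hmvec0 x
  -- closedness of the cone
  have hCclosed : IsClosed (C : Set V) := by
    apply IsSeqClosed.isClosed
    intro u c hu huc
    choose r hr w hw hu' using hu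
    have hcoord : ∀ k, (u k) α₀ = r k := by
      intro k
      rw [hu' k, PiLp.smul_apply, hWone _ (hw k), smul_eq_mul, mul_one]
    have hproj : Filter.Tendsto (fun k => (u k) α₀) Filter.atTop (nhds (c α₀)) := by
      have := ((EuclideanSpace.proj (𝕜 := ℝ) α₀).continuous.tendsto c).comp huc
      simpa [PiLp.proj_apply, Function.comp_def] using this
    have hrt : Filter.Tendsto r Filter.atTop (nhds (c α₀)) := by
      simpa [hcoord] using hproj
    have hc0 : 0 ≤ c α₀ := ge_of_tendsto' hrt hr
    obtain ⟨wl, hwl, φ, hφ, hwφ⟩ := hWcomp.tendsto_subseq hw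
    have h1 : Filter.Tendsto (u ∘ φ) Filter.atTop (nhds c) := huc.comp hφ.tendsto_atTop
    have h2 : Filter.Tendsto (u ∘ φ) Filter.atTop (nhds ((c α₀) • wl)) := by
      have : (u ∘ φ) = fun j => r (φ j) • w (φ j) := by
        funext j; exact hu' (φ j)
      rw [this]
      exact Filter.Tendsto.smul (hrt.comp hφ.tendsto_atTop) hwφ
    exact ⟨c α₀, hc0, wl, hwl, tendsto_nhds_unique h1 h2⟩
  have hCne : (C : Set V).Nonempty := by
    obtain ⟨x₀, hx₀⟩ := hKne
    exact ⟨mvec n d x₀, ⟨1, zero_le_one, mvec n d x₀,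
      subset_convexHull ℝ M ⟨x₀, hx₀, rfl⟩, (one_smul ℝ _).symm⟩⟩
  set yv : V := WithLp.toLp 2 (fun α => y α.1) with hyv
  have hyC : yv ∈ C := by
    by_contra hnot
    obtain ⟨v, hv1, hv2⟩ :=
      (show ∃ v : V, (∀ x ∈ C, 0 ≤ inner ℝ x v) ∧ inner ℝ yv v < 0 from by
        obtain ⟨v₀, r₀, hr₀, w₀, hw₀, -⟩ := hCne
        let P : ProperCone ℝ V :=
          { carrier := (C : Set V)
            zero_mem' := ⟨0, le_rfl, w₀, hw₀, (zero_smul ℝ w₀).symm⟩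
            add_mem' := fun ha hb => C.add_mem ha hb
            smul_mem' := by
              rintro c x ⟨r, hr, w, hw, rfl⟩
              exact ⟨(c : ℝ) * r, mul_nonneg c.2 hr, w, hw, by rw [← smul_smul]; rfl⟩
            isClosed' := hCclosed }
        exact P.hyperplane_separation' (x₀ := yv) hnot)
    have hpev : ∀ x ∈ K, 0 ≤ MvPolynomial.eval x (pOf v) := by
      intro x hx
      have hm : mvec n d x ∈ C := ⟨1, zero_le_one, mvec n d x,
        subset_convexHull ℝ M ⟨x, hx, rfl⟩, (one_smul ℝ _).symm⟩
      have := hv1 _ hm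
      rw [euclid_inner] at this
      rw [eval_pOf]
      refine le_of_le_of_eq this (Finset.sum_congr rfl fun α _ => ?_)
      rw [mul_comm]; rfl
    have hriesz := H (pOf v) (totalDegree_pOf v) hpev
    rw [riesz_pOf] at hriesz
    rw [real_inner_comm, euclid_inner] at hv2
    have : (∑ α : {α : Fin n →₀ ℕ // expDeg α ≤ d}, v α * y α.1)
        = ∑ α : {α : Fin n →₀ ℕ // expDeg α ≤ d}, v α * yv α := rfl
    linarith [hv2, hriesz, this ▸ hriesz]
  obtain ⟨r, hr, w, hwW, hy⟩ := hyC
  obtain ⟨ι', hfin', z, wt, hzM, _, hwtpos, hwt1, hsum⟩ :=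
    eq_pos_convex_span_of_mem_convexHull hwW
  letI := hfin'
  choose x hxK hxz using fun i => (Set.mem_image _ _ _).1 (hzM (Set.mem_range_self i))
  refine ⟨∑ i : ι', ENNReal.ofReal (r * wt i) • Measure.dirac (x i), ?_, ?_, ?_⟩
  · constructor
    rw [Measure.finset_sum_apply]
    refine ENNReal.sum_lt_top.2 fun i _ => ?_
    rw [Measure.smul_apply, smul_eq_mul]
    exact ENNReal.mul_lt_top ENNReal.ofReal_lt_top (measure_lt_top _ _)
  · rw [Measure.finset_sum_apply]
    refine Finset.sum_eq_zero fun i _ => ?_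
    rw [Measure.smul_apply, Measure.dirac_apply' _ hK.isClosed.measurableSet.compl,
      Set.indicator_of_notMem (by simp [hxK i]), smul_zero]
  · intro α hα
    set A : {α : Fin n →₀ ℕ // expDeg α ≤ d} := ⟨α, hα⟩ with hA
    have hyA : y α = r * w A := by
      have : yv A = (r • w) A := by rw [hy]
      rw [hyv, PiLp.smul_apply] at this
      simpa [hA, WithLp.ofLp_smul, Pi.smul_apply, PiLp.smul_apply, smul_eq_mul] using this
    have hwA : w A = ∑ i : ι', wt i * (∏ j, (x i j) ^ (α j)) := by
      have := congrArg (fun v : V => (EuclideanSpace.proj (𝕜 := ℝ) A) v) hsum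
      simp only [map_sum, _root_.map_smul, PiLp.proj_apply, smul_eq_mul] at this
      rw [← this]
      refine Finset.sum_congr rfl fun i _ => ?_
      rw [← hxz i]
      rfl
    rw [integral_finset_sum_measure (fun i _ =>
      (integrable_dirac_of_continuous (continuous_monoFun α) (x i)).smul_measure
        ENNReal.ofReal_ne_top)]
    have : ∀ i : ι', (∫ a, (∏ j, (a j) ^ (α j)) ∂(ENNReal.ofReal (r * wt i) • Measure.dirac (x i)))
        = (r * wt i) * ∏ j, (x i j) ^ (α j) := by
      intro i
      rw [integral_smul_measure, integral_dirac, smul_eq_mul,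
        ENNReal.toReal_ofReal (mul_nonneg hr (hwtpos i).le)]
    rw [Finset.sum_congr rfl fun i _ => this i, hyA, hwA, Finset.mul_sum]
    exact Finset.sum_congr rfl fun i _ => by ring
end

section
/- Let K ⊆ ℝⁿ be compact and y = (y_α)_{α ∈ ℕⁿ_d} with y₀ > 0. Then y is NOT representable by a nonnegative Borel measure supported on K if and only if there exists a polynomial p ∈ ℝ[x]_{≤d} strictly positive on K with L_y(p) = 0. -/
open MvPolynomial MeasureTheory

namespace Stmt7Aux

/-- Carathéodory: the convex hull of a compact set in a finite-dimensional normed real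
vector space is compact. -/
theorem isCompact_convexHull' {E : Type*} [NormedAddCommGroup E] [NormedSpace ℝ E]
    [FiniteDimensional ℝ E] {s : Set E} (hs : IsCompact s) : IsCompact (convexHull ℝ s) := by
  classical
  rcases s.eq_empty_or_nonempty with rfl | ⟨v₀, hv₀⟩
  · simp
  set N := Module.finrank ℝ E with hN
  have himg : convexHull ℝ s =
      (fun q : (Fin (N + 1) → ℝ) × (Fin (N + 1) → E) => ∑ i, q.1 i • q.2 i) ''
        (stdSimplex ℝ (Fin (N + 1)) ×ˢ Set.univ.pi fun _ => s) := by
    apply Set.Subset.antisymm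
    · intro x hx
      obtain ⟨ι, hι, z, w, hzs, hai, hpos, hsum, hx⟩ :=
        eq_pos_convex_span_of_mem_convexHull hx
      -- card ι ≤ N + 1
      have hne : Nonempty ι := by
        by_contra h
        rw [not_nonempty_iff] at h
        simp [Finset.univ_eq_empty] at hsum
      obtain ⟨k, hk⟩ : ∃ k, Fintype.card ι = k + 1 :=
        ⟨Fintype.card ι - 1, (Nat.succ_pred_eq_of_pos Fintype.card_pos).symm⟩
      have hcard : Fintype.card ι ≤ N + 1 := by
        have h1 := hai.finrank_vectorSpan hk
        have h2 : Module.finrank ℝ (vectorSpan ℝ (Set.range z)) ≤ N :=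
          Submodule.finrank_le _
        omega
      obtain ⟨e⟩ : Nonempty (ι ↪ Fin (N + 1)) := by
        apply Function.Embedding.nonempty_of_card_le
        simpa using hcard
      set q1 : Fin (N + 1) → ℝ := fun j => if h : ∃ i, e i = j then w h.choose else 0 with hq1
      set q2 : Fin (N + 1) → E := fun j => if h : ∃ i, e i = j then z h.choose else v₀ with hq2
      have hgen : ∀ (i : ι), (∃ i', e i' = e i) ∧
          ∀ (h : ∃ i', e i' = e i), h.choose = i := by
        intro i
        refine ⟨⟨i, rfl⟩, fun h => e.injective h.choose_spec⟩
      have hq1e : ∀ i, q1 (e i) = w i := by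
        intro i
        rw [hq1]
        simp only [(hgen i).1, dif_pos]
        rw [(hgen i).2]
      have hq2e : ∀ i, q2 (e i) = z i := by
        intro i
        rw [hq2]
        simp only [(hgen i).1, dif_pos]
        rw [(hgen i).2]
      have hq1z : ∀ j ∉ Finset.univ.image e, q1 j = 0 := by
        intro j hj
        have hne' : ¬ ∃ i, e i = j := fun ⟨i, hi⟩ => hj (Finset.mem_image.2 ⟨i, Finset.mem_univ i, hi⟩)
        show (if h : ∃ i, e i = j then w h.choose else 0) = 0
        exact dif_neg hne'
      refine ⟨⟨q1, q2⟩, ⟨⟨fun j => ?_, ?_⟩, fun j _ => ?_⟩, ?_⟩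
      · rw [hq1]; dsimp only
        split
        · exact (hpos _).le
        · exact le_rfl
      · -- sum of q1 = 1
        dsimp only
        rw [← Finset.sum_subset (Finset.subset_univ (Finset.univ.image e))
            (fun j _ hj => hq1z j hj),
          Finset.sum_image (fun a _ b _ hab => e.injective hab)]
        simp only [hq1e]
        exact hsum
      · -- q2 j ∈ s
        rw [hq2]; dsimp only
        split
        · exact hzs (Set.mem_range_self _)
        · exact hv₀
      · -- the sum equals x
        dsimp only
        rw [← Finset.sum_subset (Finset.subset_univ (Finset.univ.image e))
            (fun j _ hj => by rw [hq1z j hj, zero_smul]),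
          Finset.sum_image (fun a _ b _ hab => e.injective hab)]
        simp only [hq1e, hq2e]
        exact hx
    · rintro _ ⟨⟨l, u⟩, ⟨hl, hu⟩, rfl⟩
      exact (convex_convexHull ℝ s).sum_mem (fun i _ => hl.1 i) hl.2
        (fun i _ => subset_convexHull ℝ s (hu i (Set.mem_univ i)))
  rw [himg]
  have hcont : Continuous fun q : (Fin (N + 1) → ℝ) × (Fin (N + 1) → E) =>
      ∑ i, q.1 i • q.2 i :=
    continuous_finset_sum _ fun i _ =>
      ((continuous_apply i).comp continuous_fst).smul ((continuous_apply i).comp continuous_snd)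
  exact ((isCompact_stdSimplex _ _).prod (isCompact_univ_pi fun _ => hs)).image hcont

/-- The conic (nonnegative) span of a compact set contained in the affine hyperplane
`φ = 1` is closed. -/
theorem isClosed_nonneg_span {E : Type*} [NormedAddCommGroup E] [NormedSpace ℝ E]
    [FiniteDimensional ℝ E] {V : Set E} (hV : IsCompact V) (φ : E →L[ℝ] ℝ)
    (hφ : ∀ v ∈ V, φ v = 1) :
    IsClosed ((Submodule.span {c : ℝ // 0 ≤ c} V : Submodule {c : ℝ // 0 ≤ c} E) : Set E) := by
  classical
  rcases V.eq_empty_or_nonempty with rfl | hVne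
  · rw [Submodule.span_empty, Submodule.bot_coe]
    exact isClosed_singleton
  set C := convexHull ℝ V with hCdef
  have hCcpt : IsCompact C := isCompact_convexHull' hV
  have hCne : C.Nonempty := ⟨hVne.choose, subset_convexHull ℝ V hVne.choose_spec⟩
  have hconv : Convex ℝ ((Submodule.span {c : ℝ // 0 ≤ c} V :
      Submodule {c : ℝ // 0 ≤ c} E) : Set E) := by
    intro x hx y hy a b ha hb _
    exact Submodule.add_mem _ (Submodule.smul_mem _ ⟨a, ha⟩ hx) (Submodule.smul_mem _ ⟨b, hb⟩ hy)
  have hCsub : C ⊆ ((Submodule.span {c : ℝ // 0 ≤ c} V :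
      Submodule {c : ℝ // 0 ≤ c} E) : Set E) :=
    convexHull_min Submodule.subset_span hconv
  have hφC : ∀ w ∈ C, φ w = 1 := by
    intro w hw
    have h1 : C ⊆ {x | φ x = 1} :=
      convexHull_min (fun v hv => hφ v hv) (convex_hyperplane φ.toLinearMap.isLinear 1)
    exact h1 hw
  have hSeq : ((Submodule.span {c : ℝ // 0 ≤ c} V : Submodule {c : ℝ // 0 ≤ c} E) : Set E) =
      {m | ∃ t : ℝ, 0 ≤ t ∧ ∃ w ∈ C, m = t • w} := by
    apply Set.Subset.antisymm
    · intro m hm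
      induction hm using Submodule.span_induction with
      | mem v hv => exact ⟨1, zero_le_one, v, subset_convexHull ℝ V hv, (one_smul ℝ v).symm⟩
      | zero => exact ⟨0, le_rfl, hCne.choose, hCne.choose_spec, (zero_smul ℝ _).symm⟩
      | add x y hx hy ihx ihy =>
        obtain ⟨t₁, ht₁, w₁, hw₁, rfl⟩ := ihx
        obtain ⟨t₂, ht₂, w₂, hw₂, rfl⟩ := ihy
        rcases eq_or_lt_of_le (add_nonneg ht₁ ht₂) with h0 | hpos
        · have h1 : t₁ = 0 := by linarith
          have h2 : t₂ = 0 := by linarith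
          exact ⟨0, le_rfl, w₁, hw₁, by rw [h1, h2]; simp⟩
        · refine ⟨t₁ + t₂, (add_nonneg ht₁ ht₂),
            (t₁ / (t₁ + t₂)) • w₁ + (t₂ / (t₁ + t₂)) • w₂,
            (convex_convexHull ℝ V) hw₁ hw₂ (div_nonneg ht₁ (by linarith))
              (div_nonneg ht₂ (by linarith)) (by field_simp), ?_⟩
          rw [smul_add, smul_smul, smul_smul]
          have hne0 : t₁ + t₂ ≠ 0 := ne_of_gt hpos
          rw [mul_div_cancel₀ _ hne0, mul_div_cancel₀ _ hne0]
      | smul c x hx ihx =>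
        obtain ⟨t, ht, w, hw, rfl⟩ := ihx
        exact ⟨c.1 * t, mul_nonneg c.2 ht, w, hw, by rw [← Nonneg.coe_smul, smul_smul]⟩
    · rintro m ⟨t, ht, w, hw, rfl⟩
      exact Submodule.smul_mem _ ⟨t, ht⟩ (hCsub hw)
  rw [hSeq]
  apply IsSeqClosed.isClosed
  intro m z hm hz
  choose t ht w hw hmw using hm
  have htφ : ∀ k, φ (m k) = t k := by
    intro k
    rw [hmw k, φ.map_smul, smul_eq_mul, hφC _ (hw k), mul_one]
  obtain ⟨winf, hwinf, ψ, hψ, hwψ⟩ := hCcpt.tendsto_subseq hw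
  have h1 : Filter.Tendsto (fun j => m (ψ j)) Filter.atTop (nhds z) :=
    hz.comp hψ.tendsto_atTop
  have h2 : Filter.Tendsto (fun j => t (ψ j)) Filter.atTop (nhds (φ z)) := by
    have h3 := (φ.continuous.tendsto z).comp h1
    simpa only [Function.comp_def, htφ] using h3
  have h3 : Filter.Tendsto (fun j => t (ψ j) • w (ψ j)) Filter.atTop (nhds (φ z • winf)) :=
    h2.smul hwψ
  have h1' : Filter.Tendsto (fun j => t (ψ j) • w (ψ j)) Filter.atTop (nhds z) := by
    have : (fun j => t (ψ j) • w (ψ j)) = fun j => m (ψ j) := by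
      funext j; rw [← hmw]
    rw [this]; exact h1
  refine ⟨φ z, ?_, winf, hwinf, tendsto_nhds_unique h1' h3⟩
  exact ge_of_tendsto h2 (Filter.Eventually.of_forall fun j => ht (ψ j))

/-! ### Setup: the finite index of monomials of degree at most `d` -/

lemma finite_idxSet (n d : ℕ) : {α : Fin n →₀ ℕ | expDeg α ≤ d}.Finite := by
  have h1 : {f : Fin n →₀ ℕ | ∀ a, f a ≤ d}.Finite :=
    (Set.Finite.pi' fun _ : Fin n => Set.finite_le_nat d).preimage DFunLike.coe_injective.injOn
  refine h1.subset ?_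
  intro α hα i
  rcases eq_or_ne (α i) 0 with h | h
  · simp [h]
  · exact le_trans (Finset.single_le_sum (fun _ _ => Nat.zero_le _)
      (Finsupp.mem_support_iff.mpr h)) hα

/-- The index type of monomials of total degree at most `d`. -/
abbrev Idx (n d : ℕ) := {α : Fin n →₀ ℕ // expDeg α ≤ d}

noncomputable instance (n d : ℕ) : Fintype (Idx n d) := (finite_idxSet n d).fintype

/-- The ambient Euclidean space of truncated moment sequences. -/
abbrev Esp (n d : ℕ) := EuclideanSpace ℝ (Idx n d)

/-- The index of the constant monomial. -/
def e0 (n d : ℕ) : Idx n d := ⟨0, by simp [expDeg]⟩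

/-- The moment (Veronese) map. -/
noncomputable def vv (n d : ℕ) (x : Fin n → ℝ) : Esp n d :=
  (WithLp.equiv 2 _).symm fun i : Idx n d => ∏ j, x j ^ (i.1 j)

lemma vv_apply (n d : ℕ) (x : Fin n → ℝ) (i : Idx n d) : vv n d x i = ∏ j, x j ^ (i.1 j) := rfl

lemma vv_e0 (n d : ℕ) (x : Fin n → ℝ) : vv n d x (e0 n d) = 1 := by
  rw [vv_apply]
  simp [e0]

lemma continuous_vv (n d : ℕ) : Continuous (vv n d) := by
  refine Continuous.comp (PiLp.continuous_toLp 2 _) (continuous_pi fun i => ?_)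
  exact continuous_finset_prod _ fun j _ => (continuous_apply j).pow _

/-- The moment cone: conic hull of the moment vectors of points of `K`. -/
noncomputable def mcone (n d : ℕ) (K : Set (Fin n → ℝ)) : Submodule {c : ℝ // 0 ≤ c} (Esp n d) :=
  Submodule.span {c : ℝ // 0 ≤ c} (vv n d '' K)

lemma isClosed_mcone (n d : ℕ) {K : Set (Fin n → ℝ)} (hK : IsCompact K) :
    IsClosed ((mcone n d K : Submodule {c : ℝ // 0 ≤ c} (Esp n d)) : Set (Esp n d)) := by
  refine isClosed_nonneg_span (hK.image (continuous_vv n d)) (EuclideanSpace.proj (e0 n d)) ?_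
  rintro v ⟨x, _, rfl⟩
  simpa using vv_e0 n d x

/-- Every element of the moment cone is represented by a finite measure on `K`. -/
lemma rep_of_mem_mcone {n d : ℕ} {K : Set (Fin n → ℝ)} (hK : IsCompact K) {b : Esp n d}
    (hb : b ∈ mcone n d K) :
    ∃ μ : Measure (Fin n → ℝ), IsFiniteMeasure μ ∧ μ Kᶜ = 0 ∧
      ∀ i : Idx n d, b i = ∫ a, ∏ j, (a j) ^ (i.1 j) ∂μ := by
  classical
  obtain ⟨c, hsupp, hsum⟩ := Submodule.mem_span_set.1 hb
  have hpt : ∀ w : Esp n d, w ∈ c.support → ∃ x, x ∈ K ∧ vv n d x = w := by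
    intro w hw
    rcases hsupp hw with ⟨x, hx, hxe⟩
    exact ⟨x, hx, hxe⟩
  choose pt hptK hptv using hpt
  set μ : Measure (Fin n → ℝ) :=
    ∑ w ∈ c.support.attach, (ENNReal.ofReal ((c w.1).1)) • Measure.dirac (pt w.1 w.2) with hμ
  have hμapp : ∀ s : Set (Fin n → ℝ),
      μ s = ∑ w ∈ c.support.attach, ENNReal.ofReal ((c w.1).1) * Measure.dirac (pt w.1 w.2) s := by
    intro s
    rw [hμ, Measure.finset_sum_apply]
    simp only [Measure.smul_apply, smul_eq_mul]
  have hμfin : IsFiniteMeasure μ := by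
    constructor
    rw [hμapp]
    refine ENNReal.sum_lt_top.2 fun w _ => ?_
    exact ENNReal.mul_lt_top ENNReal.ofReal_lt_top (measure_lt_top _ _)
  have hμK : μ Kᶜ = 0 := by
    rw [hμapp]
    refine Finset.sum_eq_zero fun w _ => ?_
    rw [Measure.dirac_apply' _ hK.isClosed.measurableSet.compl,
      Set.indicator_of_notMem (by simp [hptK w.1 w.2]), mul_zero]
  refine ⟨μ, hμfin, hμK, fun i => ?_⟩
  -- the monomial function
  set f : (Fin n → ℝ) → ℝ := fun a => ∏ j, a j ^ (i.1 j) with hf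
  have hfc : Continuous f := continuous_finset_prod _ fun j _ => (continuous_apply j).pow _
  have hIdirac : ∀ x : Fin n → ℝ, Integrable f (Measure.dirac x) := by
    intro x
    refine ⟨hfc.aestronglyMeasurable, ?_⟩
    rw [hasFiniteIntegral_iff_norm]
    rw [lintegral_dirac' x (hfc.norm.measurable.ennreal_ofReal)]
    exact ENNReal.ofReal_lt_top
  have hint : ∫ a, f a ∂μ = ∑ w ∈ c.support.attach, ((c w.1).1) * w.1 i := by
    rw [hμ, integral_finset_sum_measure (fun w _ => ((hIdirac _).smul_measure
      ENNReal.ofReal_ne_top))]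
    refine Finset.sum_congr rfl fun w _ => ?_
    rw [integral_smul_measure, integral_dirac' f _ hfc.stronglyMeasurable,
      ENNReal.toReal_ofReal (c w.1).2, smul_eq_mul]
    congr 1
    rw [hf]
    show vv n d (pt w.1 w.2) i = w.1 i
    rw [hptv w.1 w.2]
  rw [hint]
  have hb' : b = ∑ w ∈ c.support, ((c w).1 : ℝ) • w := by
    rw [← hsum]
    rfl
  have hbi : b i = ∑ w ∈ c.support, ((c w).1) * w i := by
    have h2 := congrArg (EuclideanSpace.proj i) hb'
    simpa only [map_sum, _root_.map_smul, PiLp.proj_apply, smul_eq_mul] using h2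
  rw [hbi, ← Finset.sum_attach c.support (fun w => ((c w).1) * w i)]

/-! ### Helpers for the easy direction -/

lemma integrable_of_compact {n : ℕ} {K : Set (Fin n → ℝ)} (hK : IsCompact K)
    (μ : Measure (Fin n → ℝ)) [IsFiniteMeasure μ] (hμK : μ Kᶜ = 0)
    {g : (Fin n → ℝ) → ℝ} (hg : Continuous g) : Integrable g μ := by
  obtain ⟨C, hC⟩ := hK.exists_bound_of_continuousOn hg.continuousOn
  refine ⟨hg.aestronglyMeasurable, ?_⟩
  refine HasFiniteIntegral.of_bounded (C := C) ?_
  have hae : ∀ᵐ a ∂μ, a ∈ K := by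
    rw [MeasureTheory.ae_iff]
    exact hμK
  exact hae.mono fun a ha => hC a ha

lemma riesz_eq_sum_subset {n : ℕ} (y : (Fin n →₀ ℕ) → ℝ) {p : MvPolynomial (Fin n) ℝ}
    {s : Finset (Fin n →₀ ℕ)} (hs : p.support ⊆ s) :
    riesz y p = ∑ α ∈ s, MvPolynomial.coeff α p * y α :=
  Finset.sum_subset hs fun α _ hα => by
    rw [MvPolynomial.notMem_support_iff.1 hα, zero_mul]

lemma riesz_eq_integral {n d : ℕ} {K : Set (Fin n → ℝ)} (hK : IsCompact K)
    {y : (Fin n →₀ ℕ) → ℝ} (μ : Measure (Fin n → ℝ)) [IsFiniteMeasure μ]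
    (hrep : Represents d μ K y) {p : MvPolynomial (Fin n) ℝ} (hp : p.totalDegree ≤ d) :
    riesz y p = ∫ a, MvPolynomial.eval a p ∂μ := by
  have hint : ∀ α : Fin n →₀ ℕ, Integrable (fun a => ∏ j, a j ^ α j) μ := fun α =>
    integrable_of_compact hK μ hrep.1
      (continuous_finset_prod _ fun j _ => (continuous_apply j).pow _)
  calc riesz y p = ∑ α ∈ p.support, MvPolynomial.coeff α p * y α := rfl
    _ = ∑ α ∈ p.support, ∫ a, MvPolynomial.coeff α p * ∏ j, a j ^ α j ∂μ := by
        refine Finset.sum_congr rfl fun α hα => ?_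
        rw [hrep.2 α (le_trans (MvPolynomial.le_totalDegree hα) hp), integral_const_mul]
    _ = ∫ a, ∑ α ∈ p.support, MvPolynomial.coeff α p * ∏ j, a j ^ α j ∂μ :=
        (integral_finset_sum _ fun α _ => (hint α).const_mul _).symm
    _ = ∫ a, MvPolynomial.eval a p ∂μ := by
        refine integral_congr_ae (Filter.Eventually.of_forall fun a => ?_)
        show ∑ α ∈ p.support, MvPolynomial.coeff α p * ∏ j, a j ^ α j = MvPolynomial.eval a p
        rw [MvPolynomial.eval_eq']

lemma integral_eval_pos {n : ℕ} {K : Set (Fin n → ℝ)} (hK : IsCompact K)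
    (μ : Measure (Fin n → ℝ)) [IsFiniteMeasure μ] (hμK : μ Kᶜ = 0) (hμ0 : μ Set.univ ≠ 0)
    {p : MvPolynomial (Fin n) ℝ} (hpos : ∀ a ∈ K, 0 < MvPolynomial.eval a p) :
    0 < ∫ a, MvPolynomial.eval a p ∂μ := by
  have hg : Continuous fun a : Fin n → ℝ => MvPolynomial.eval a p := p.continuous_eval
  have hint := integrable_of_compact hK μ hμK hg
  have hae : ∀ᵐ a ∂μ, a ∈ K := by
    rw [MeasureTheory.ae_iff]
    exact hμK
  rw [integral_pos_iff_support_of_nonneg_ae (hae.mono fun a ha => (hpos a ha).le) hint]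
  have hKs : K ⊆ Function.support fun a => MvPolynomial.eval a p := fun a ha => (hpos a ha).ne'
  have h1 : 0 < μ Set.univ := pos_iff_ne_zero.2 hμ0
  have h2 : μ Set.univ ≤ μ K := by
    have h3 := measure_union_le (μ := μ) K Kᶜ
    rwa [Set.union_compl_self, hμK, add_zero] at h3
  exact lt_of_lt_of_le h1 (le_trans h2 (measure_mono hKs))

end Stmt7Aux

open scoped InnerProductSpace

/-- Strong alternative: for compact `K` and `y₀ > 0`, `y` is NOT moment-representable on
`K` iff there is a polynomial of degree `≤ d` strictly positive on `K` annihilated by the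
Riesz functional `L_y`. -/
theorem stmt7 {n d : ℕ} (K : Set (Fin n → ℝ)) (hK : IsCompact K)
    (y : (Fin n →₀ ℕ) → ℝ) (hy0 : 0 < y 0) :
    (¬ ∃ μ : Measure (Fin n → ℝ), IsFiniteMeasure μ ∧ Represents d μ K y) ↔
      ∃ p : MvPolynomial (Fin n) ℝ, p.totalDegree ≤ d ∧
        (∀ a ∈ K, 0 < MvPolynomial.eval a p) ∧ riesz y p = 0 := by
  classical
  constructor
  · -- hard direction
    intro hno
    by_contra hnp
    push_neg at hnp
    apply hno
    set b : Stmt7Aux.Esp n d :=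
      (WithLp.equiv 2 _).symm (fun i : Stmt7Aux.Idx n d => y i.1) with hbdef
    have hbmem : b ∈ Stmt7Aux.mcone n d K := by
      by_contra hbn
      obtain ⟨z, hz1, hz2⟩ :=
        ProperCone.hyperplane_separation'
          ({ toSubmodule := (Stmt7Aux.mcone n d K : Submodule {c : ℝ // 0 ≤ c} (Stmt7Aux.Esp n d)),
             isClosed' := Stmt7Aux.isClosed_mcone n d hK } : ProperCone ℝ (Stmt7Aux.Esp n d))
          (x₀ := b) hbn
      rw [real_inner_comm] at hz2
      -- build the polynomial q
      set q : MvPolynomial (Fin n) ℝ :=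
        ∑ i : Stmt7Aux.Idx n d, MvPolynomial.monomial i.1 (z i) with hqdef
      have hcoeff : ∀ i : Stmt7Aux.Idx n d, MvPolynomial.coeff i.1 q = z i := by
        intro i
        rw [hqdef, MvPolynomial.coeff_sum, Finset.sum_eq_single i]
        · rw [MvPolynomial.coeff_monomial, if_pos rfl]
        · intro j _ hji
          rw [MvPolynomial.coeff_monomial, if_neg fun h => hji (Subtype.ext h)]
        · intro h
          exact absurd (Finset.mem_univ i) h
      have hsupp : q.support ⊆ Finset.univ.image (fun i : Stmt7Aux.Idx n d => i.1) := by
        intro α hα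
        rw [MvPolynomial.mem_support_iff] at hα
        by_contra hc
        apply hα
        rw [hqdef, MvPolynomial.coeff_sum]
        refine Finset.sum_eq_zero fun i _ => ?_
        rw [MvPolynomial.coeff_monomial, if_neg]
        intro h
        exact hc (Finset.mem_image.2 ⟨i, Finset.mem_univ i, h⟩)
      have hdegq : q.totalDegree ≤ d := by
        rw [MvPolynomial.totalDegree]
        refine Finset.sup_le fun α hα => ?_
        obtain ⟨i, _, rfl⟩ := Finset.mem_image.1 (hsupp hα)
        exact i.2
      have heval : ∀ a : Fin n → ℝ,
          MvPolynomial.eval a q = ⟪Stmt7Aux.vv n d a, z⟫_ℝ := by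
        intro a
        rw [hqdef, map_sum, PiLp.inner_apply]
        refine Finset.sum_congr rfl fun i _ => ?_
        rw [MvPolynomial.eval_monomial, RCLike.inner_apply, starRingEnd_apply, star_trivial,
          Stmt7Aux.vv_apply]
        congr 1
        exact Finsupp.prod_pow _ _
      have hrq : riesz y q = ⟪z, b⟫_ℝ := by
        rw [Stmt7Aux.riesz_eq_sum_subset y hsupp,
          Finset.sum_image (fun i _ j _ h => Subtype.ext h), PiLp.inner_apply]
        refine Finset.sum_congr rfl fun i _ => ?_
        rw [hcoeff i, RCLike.inner_apply, starRingEnd_apply, star_trivial]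
        exact mul_comm _ _
      -- constant correction
      set t : ℝ := -(riesz y q) / y 0 with htdef
      have ht : 0 < t := div_pos (by rw [hrq] at *; linarith) hy0
      set p : MvPolynomial (Fin n) ℝ := q + MvPolynomial.C t with hpdef
      have h0mem : (0 : Fin n →₀ ℕ) ∈ Finset.univ.image (fun i : Stmt7Aux.Idx n d => i.1) :=
        Finset.mem_image.2 ⟨Stmt7Aux.e0 n d, Finset.mem_univ _, rfl⟩
      have hsuppC : (MvPolynomial.C t : MvPolynomial (Fin n) ℝ).support ⊆ {0} := by
        rw [MvPolynomial.C_apply]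
        exact MvPolynomial.support_monomial_subset
      have hsuppP : p.support ⊆ Finset.univ.image (fun i : Stmt7Aux.Idx n d => i.1) := by
        refine Finset.Subset.trans (MvPolynomial.support_add) (Finset.union_subset hsupp ?_)
        exact Finset.Subset.trans hsuppC (Finset.singleton_subset_iff.2 h0mem)
      have hCt : ∑ α ∈ Finset.univ.image (fun i : Stmt7Aux.Idx n d => i.1),
          MvPolynomial.coeff α (MvPolynomial.C t : MvPolynomial (Fin n) ℝ) * y α = t * y 0 := by
        rw [Finset.sum_eq_single (0 : Fin n →₀ ℕ)]
        · rw [MvPolynomial.coeff_zero_C]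
        · intro α _ hα0
          rw [MvPolynomial.coeff_C, if_neg fun h => hα0 h.symm, zero_mul]
        · intro h
          exact absurd h0mem h
      have hrP : riesz y p = riesz y q + t * y 0 := by
        rw [Stmt7Aux.riesz_eq_sum_subset y hsuppP, Stmt7Aux.riesz_eq_sum_subset y hsupp, ← hCt,
          ← Finset.sum_add_distrib]
        refine Finset.sum_congr rfl fun α _ => ?_
        rw [hpdef, MvPolynomial.coeff_add]
        ring
      have hrP0 : riesz y p = 0 := by
        have h4 : t * y 0 = -(riesz y q) := div_mul_cancel₀ _ (ne_of_gt hy0)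
        rw [hrP, h4]
        ring
      have hdegP : p.totalDegree ≤ d := by
        rw [MvPolynomial.totalDegree]
        refine Finset.sup_le fun α hα => ?_
        obtain ⟨i, _, rfl⟩ := Finset.mem_image.1 (hsuppP hα)
        exact i.2
      have hposP : ∀ a ∈ K, 0 < MvPolynomial.eval a p := by
        intro a ha
        rw [hpdef, map_add, MvPolynomial.eval_C, heval]
        have h5 : (0 : ℝ) ≤ ⟪Stmt7Aux.vv n d a, z⟫_ℝ :=
          hz1 _ (Submodule.subset_span ⟨a, ha, rfl⟩)
        linarith
      exact hnp p hdegP hposP hrP0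
    obtain ⟨μ, hfin, hK0, hmom⟩ := Stmt7Aux.rep_of_mem_mcone hK hbmem
    refine ⟨μ, hfin, hK0, fun α hα => ?_⟩
    exact hmom ⟨α, hα⟩
  · -- easy direction
    rintro ⟨p, hdeg, hpos, hr0⟩ ⟨μ, hfin, hrep⟩
    have h1 : riesz y p = ∫ a, MvPolynomial.eval a p ∂μ :=
      Stmt7Aux.riesz_eq_integral hK μ hrep hdeg
    have hμ0 : μ Set.univ ≠ 0 := by
      intro h
      rw [Measure.measure_univ_eq_zero] at h
      have h2 := hrep.2 0 (by simp [expDeg])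
      rw [h] at h2
      simp only [integral_zero_measure] at h2
      rw [h2] at hy0
      exact lt_irrefl 0 hy0
    have h3 := Stmt7Aux.integral_eval_pos hK μ hrep.1 hμ0 hpos
    rw [hr0] at h1
    linarith
end
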